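/- Let k be a field and n ≥ 4. For a configuration of n distinct points z₁,…,z_n in k, set u_{ij} = ((z_i - z_{j+1})(z_{i+1} - z_j))/((z_i - z_j)(z_{i+1} - z_{j+1})) for each diagonal (i,j) of the n-gon (indices mod n, with 2 ≤ j - i ≤ n-2). Then for each diagonal (i,j), u_{ij} + ∏_{(k,ℓ) crossing (i,j)} u_{kℓ} = 1, where the product ranges over diagonals (k,ℓ) that cross (i,j) in the interior of the polygon. -/

import Mathlib

open Finset

private lemma telescope_aux {K : Type*} [Field K] (f : ℕ → K) (a : ℕ) :
    ∀ b, a ≤ b → (∀ l, a ≤ l → l ≤ b → f l ≠ 0) →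
      ∏ l ∈ Finset.Ico a b, (f (l + 1) / f l) = f b / f a := by
  refine Nat.le_induction ?_ ?_
  · intro h
    simp [div_self (h a le_rfl le_rfl)]
  · intro b hb ih h
    have hfb : f b ≠ 0 := h b hb (by omega)
    have hfa : f a ≠ 0 := h a le_rfl (by omega)
    rw [Finset.prod_Ico_succ_top hb, ih (fun l h1 h2 => h l h1 (by omega))]
    field_simp

/-- **Dihedral coordinates satisfy the u-equations.** Let `z 0, …, z (n-1)` be `n ≥ 4`
distinct points of a field `K` (extended `n`-periodically), and for a diagonal `(i,j)` of
the `n`-gon (i.e. `i < j < n`, `2 ≤ j - i ≤ n - 2`) set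
`u i j = ((z i - z (j+1)) (z (i+1) - z j)) / ((z i - z j) (z (i+1) - z (j+1)))`.
Then `u i j + ∏ u k ℓ = 1`, the product running over all diagonals `(k,ℓ)` crossing
`(i,j)` in the interior of the polygon. -/
theorem dihedral_u_equations {K : Type*} [Field K] (n : ℕ) (hn : 4 ≤ n)
    (z : ℕ → K) (hper : ∀ i, z (i + n) = z i)
    (hdist : ∀ a b, a < n → b < n → z a = z b → a = b)
    (u : ℕ → ℕ → K)
    (hu : ∀ i j, u i j =
      ((z i - z (j + 1)) * (z (i + 1) - z j)) /
        ((z i - z j) * (z (i + 1) - z (j + 1))))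
    (i j : ℕ) (hij : i < j ∧ j < n ∧ 2 ≤ j - i ∧ j - i ≤ n - 2) :
    u i j +
      ∏ p ∈ (range n ×ˢ range n).filter
        (fun p =>
          (p.1 < p.2 ∧ p.2 < n ∧ 2 ≤ p.2 - p.1 ∧ p.2 - p.1 ≤ n - 2) ∧
            ((i < p.1 ∧ p.1 < j ∧ j < p.2) ∨ (p.1 < i ∧ i < p.2 ∧ p.2 < j))),
        u p.1 p.2 = 1 := by
  obtain ⟨hij1, hjn, hij2, hij3⟩ := hij
  have hn0 : 0 < n := by omega
  -- periodicity extended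
  have hmul : ∀ a k, z (a + k * n) = z a := by
    intro a k
    induction k with
    | zero => simp
    | succ k ih => rw [show a + (k + 1) * n = (a + k * n) + n by ring, hper, ih]
  have hmod : ∀ a, z a = z (a % n) := by
    intro a
    conv_lhs => rw [show a = a % n + (a / n) * n by rw [Nat.mod_add_div']]
    exact hmul _ _
  -- the basic non-vanishing lemma
  have hne : ∀ a b, a < b → b < a + n → z a - z b ≠ 0 := by
    intro a b hab hban h
    have h' : z a = z b := sub_eq_zero.mp h
    rw [hmod a, hmod b] at h'
    have heq : a % n = b % n := hdist _ _ (Nat.mod_lt _ hn0) (Nat.mod_lt _ hn0) h'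
    have hdvd : n ∣ b - a := (Nat.modEq_iff_dvd' hab.le).mp heq
    have := Nat.le_of_dvd (by omega) hdvd
    omega
  have hne' : ∀ a b, a < b → b < a + n → z b - z a ≠ 0 := by
    intro a b h1 h2 h
    exact hne a b h1 h2 (by have := sub_eq_zero.mp h; rw [sub_eq_zero, this])
  -- Step 1: reindex the product over the rectangle Ioo i j × Ioo j (i+n)
  have hstep1 :
      (∏ p ∈ (range n ×ˢ range n).filter
        (fun p =>
          (p.1 < p.2 ∧ p.2 < n ∧ 2 ≤ p.2 - p.1 ∧ p.2 - p.1 ≤ n - 2) ∧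
            ((i < p.1 ∧ p.1 < j ∧ j < p.2) ∨ (p.1 < i ∧ i < p.2 ∧ p.2 < j))),
        u p.1 p.2) =
      ∏ p ∈ (Finset.Ioo i j) ×ˢ (Finset.Ioo j (i + n)), u p.1 p.2 := by
    refine Finset.prod_nbij' (fun p => if i < p.1 then p else (p.2, p.1 + n))
      (fun p => if p.2 < n then p else (p.2 - n, p.1)) ?_ ?_ ?_ ?_ ?_
    · intro p hp
      simp only [Finset.mem_filter, Finset.mem_product, Finset.mem_range] at hp
      by_cases h : i < p.1
      · rw [if_pos h]
        simp only [Finset.mem_product, Finset.mem_Ioo]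
        omega
      · rw [if_neg h]
        simp only [Finset.mem_product, Finset.mem_Ioo]
        omega
    · intro p hp
      simp only [Finset.mem_product, Finset.mem_Ioo] at hp
      by_cases h : p.2 < n
      · rw [if_pos h]
        simp only [Finset.mem_filter, Finset.mem_product, Finset.mem_range]
        omega
      · rw [if_neg h]
        simp only [Finset.mem_filter, Finset.mem_product, Finset.mem_range]
        omega
    · intro p hp
      simp only [Finset.mem_filter, Finset.mem_product, Finset.mem_range] at hp
      by_cases h : i < p.1
      · simp [h, show p.2 < n by omega]
      · have h2 : ¬ (p.1 + n < n) := by omega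
        simp [h, h2]
    · intro p hp
      simp only [Finset.mem_product, Finset.mem_Ioo] at hp
      by_cases h : p.2 < n
      · simp [h, show i < p.1 by omega]
      · simp [h, show ¬ i < p.2 - n by omega,
          Nat.sub_add_cancel (show n ≤ p.2 by omega)]
    · intro p hp
      simp only [Finset.mem_filter, Finset.mem_product, Finset.mem_range,
        Finset.mem_Ioo] at hp
      by_cases h : i < p.1
      · simp [h]
      · simp only [h, if_false]
        have hz1 : z (p.1 + n) = z p.1 := hper _
        have hz2 : z (p.1 + n + 1) = z (p.1 + 1) := by
          rw [show p.1 + n + 1 = (p.1 + 1) + n by ring, hper]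
        rw [hu, hu, hz2, hz1]
        rw [show (z p.2 - z (p.1 + 1)) * (z (p.2 + 1) - z p.1)
            = (z p.1 - z (p.2 + 1)) * (z (p.1 + 1) - z p.2) by ring,
          show (z p.2 - z p.1) * (z (p.2 + 1) - z (p.1 + 1))
            = (z p.1 - z p.2) * (z (p.1 + 1) - z (p.2 + 1)) by ring]
  -- Step 2: the inner telescoping product
  have hinner : ∀ k, i < k → k < j →
      ∏ l ∈ Finset.Ioo j (i + n), u k l =
        ((z k - z (i + n)) / (z (k + 1) - z (i + n))) /
          ((z k - z (j + 1)) / (z (k + 1) - z (j + 1))) := by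
    intro k hik hkj
    rw [← Finset.Ico_add_one_left_eq_Ioo]
    have heq : ∀ l ∈ Finset.Ico (j + 1) (i + n), u k l =
        (fun l => (z k - z l) / (z (k + 1) - z l)) (l + 1) /
          (fun l => (z k - z l) / (z (k + 1) - z l)) l := by
      intro l hl
      simp only [Finset.mem_Ico] at hl
      have d1 : z k - z l ≠ 0 := hne k l (by omega) (by omega)
      have d2 : z (k + 1) - z l ≠ 0 := hne (k + 1) l (by omega) (by omega)
      have d3 : z k - z (l + 1) ≠ 0 := hne k (l + 1) (by omega) (by omega)
      have d4 : z (k + 1) - z (l + 1) ≠ 0 := hne (k + 1) (l + 1) (by omega) (by omega)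
      rw [hu]
      field_simp
    rw [Finset.prod_congr rfl heq,
      telescope_aux (fun l => (z k - z l) / (z (k + 1) - z l)) (j + 1) (i + n) (by omega)]
    intro l h1 h2
    exact div_ne_zero (hne k l (by omega) (by omega)) (hne (k + 1) l (by omega) (by omega))
  -- Step 3: the outer telescoping product
  have houter :
      ∏ p ∈ (Finset.Ioo i j) ×ˢ (Finset.Ioo j (i + n)), u p.1 p.2 =
        ((z j - z (j + 1)) / (z j - z (i + n))) /
          ((z (i + 1) - z (j + 1)) / (z (i + 1) - z (i + n))) := by
    rw [Finset.prod_product']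
    have heq : ∀ k ∈ Finset.Ico (i + 1) j,
        (∏ l ∈ Finset.Ioo j (i + n), u k l) =
        (fun k => (z k - z (j + 1)) / (z k - z (i + n))) (k + 1) /
          (fun k => (z k - z (j + 1)) / (z k - z (i + n))) k := by
      intro k hk
      simp only [Finset.mem_Ico] at hk
      rw [hinner k (by omega) (by omega)]
      have d1 : z k - z (j + 1) ≠ 0 := hne k (j + 1) (by omega) (by omega)
      have d2 : z k - z (i + n) ≠ 0 := hne k (i + n) (by omega) (by omega)
      have d3 : z (k + 1) - z (j + 1) ≠ 0 := hne (k + 1) (j + 1) (by omega) (by omega)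
      have d4 : z (k + 1) - z (i + n) ≠ 0 := hne (k + 1) (i + n) (by omega) (by omega)
      field_simp
    rw [← Finset.Ico_add_one_left_eq_Ioo, Finset.prod_congr rfl heq,
      telescope_aux (fun k => (z k - z (j + 1)) / (z k - z (i + n))) (i + 1) j (by omega)]
    intro k h1 h2
    exact div_ne_zero (hne k (j + 1) (by omega) (by omega))
      (hne k (i + n) (by omega) (by omega))
  rw [hstep1, houter, hper i, hu]
  have d1 : z i - z j ≠ 0 := hne i j hij1 (by omega)
  have d2 : z (i + 1) - z (j + 1) ≠ 0 := hne (i + 1) (j + 1) (by omega) (by omega)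
  have d3 : z j - z i ≠ 0 := hne' i j hij1 (by omega)
  have d4 : z (i + 1) - z i ≠ 0 := hne' i (i + 1) (by omega) (by omega)
  field_simp
  ring
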